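/- Let q be a power of a prime p > 3 with p ≡ 1 (mod 3), and let E₁ and E₂ be elliptic curves over 𝔽_q both with j-invariant 0. Then #E₁(𝔽_q) = #E₂(𝔽_q) if and only if the groups E₁(𝔽_q) and E₂(𝔽_q) are isomorphic as abelian groups. -/

import Mathlib

open WeierstrassCurve

namespace VCAux

variable {F : Type} [Field F] (W : WeierstrassCurve.Affine F) (C : WeierstrassCurve.VariableChange F)

def vx (x : F) : F := (↑C.u⁻¹ : F) ^ 2 * (x - C.r)

def vy (x y : F) : F := (↑C.u⁻¹ : F) ^ 3 * (y - C.s * x + C.s * C.r - C.t)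

lemma uinv_ne_zero : (↑C.u⁻¹ : F) ≠ 0 := C.u⁻¹.ne_zero

variable {W C}

lemma vc_eq_key (x y : F) :
    vy C x y ^ 2 + (C • W).a₁ * vx C x * vy C x y
        + (C • W).a₃ * vy C x y
        - (vx C x ^ 3 + (C • W).a₂ * vx C x ^ 2
            + (C • W).a₄ * vx C x + (C • W).a₆) =
      (↑C.u⁻¹ : F) ^ 6 *
        (y ^ 2 + W.a₁ * x * y + W.a₃ * y - (x ^ 3 + W.a₂ * x ^ 2 + W.a₄ * x + W.a₆)) := by
  simp only [vx, vy, variableChange_a₁, variableChange_a₂, variableChange_a₃,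
    variableChange_a₄, variableChange_a₆]
  ring

lemma vc_polyY_key (x y : F) :
    2 * vy C x y + (C • W).a₁ * vx C x + (C • W).a₃ =
      (↑C.u⁻¹ : F) ^ 3 * (2 * y + W.a₁ * x + W.a₃) := by
  simp only [vx, vy, variableChange_a₁, variableChange_a₃]
  ring

lemma vc_polyX_key (x y : F) :
    (C • W).a₁ * vy C x y - (3 * vx C x ^ 2 + 2 * (C • W).a₂ * vx C x
        + (C • W).a₄) =
      (↑C.u⁻¹ : F) ^ 4 *
        ((W.a₁ * y - (3 * x ^ 2 + 2 * W.a₂ * x + W.a₄))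
          + C.s * (2 * y + W.a₁ * x + W.a₃)) := by
  simp only [vx, vy, variableChange_a₁, variableChange_a₂, variableChange_a₄]
  ring

lemma vc_equation {x y : F} :
    (C • W).toAffine.Equation (vx C x) (vy C x y) ↔ W.Equation x y := by
  rw [Affine.equation_iff', Affine.equation_iff', vc_eq_key,
    mul_eq_zero, or_iff_right (pow_ne_zero 6 (uinv_ne_zero C))]

lemma vc_nonsingular {x y : F} :
    (C • W).toAffine.Nonsingular (vx C x) (vy C x y) ↔ W.Nonsingular x y := by
  rw [Affine.nonsingular_iff', Affine.nonsingular_iff', vc_equation,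
    vc_polyX_key, vc_polyY_key]
  refine and_congr_right fun _ => ?_
  have h4 := pow_ne_zero 4 (uinv_ne_zero (F := F) C)
  have h3 := pow_ne_zero 3 (uinv_ne_zero (F := F) C)
  constructor
  · rintro (h | h)
    · by_cases hY : 2 * y + W.a₁ * x + W.a₃ = 0
      · left
        intro hX
        exact h (by rw [hX, hY]; ring)
      · exact Or.inr hY
    · exact Or.inr fun hY => h (by rw [hY, mul_zero])
  · intro h
    by_cases hY : 2 * y + W.a₁ * x + W.a₃ = 0
    · left
      have hX : W.a₁ * y - (3 * x ^ 2 + 2 * W.a₂ * x + W.a₄) ≠ 0 := by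
        rcases h with h | h
        · exact h
        · exact absurd hY h
      rw [hY, mul_zero, add_zero]
      exact mul_ne_zero h4 hX
    · exact Or.inr (mul_ne_zero h3 hY)

end VCAux

namespace VCAux

open WeierstrassCurve.Affine

variable {F : Type} [Field F] [DecidableEq F] {W : WeierstrassCurve.Affine F} {C : WeierstrassCurve.VariableChange F}

lemma vx_inj {x₁ x₂ : F} (h : vx C x₁ = vx C x₂) : x₁ = x₂ := by
  have := uinv_ne_zero C (F := F)
  have h' := mul_left_cancel₀ (pow_ne_zero 2 this) h
  linear_combination h'

lemma vy_inj {x y₁ y₂ : F} (h : vy C x y₁ = vy C x y₂) : y₁ = y₂ := by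
  have := uinv_ne_zero C (F := F)
  have h' := mul_left_cancel₀ (pow_ne_zero 3 this) h
  linear_combination h'

lemma vc_negY (x y : F) :
    (C • W).toAffine.negY (vx C x) (vy C x y) = vy C x (W.negY x y) := by
  simp only [Affine.negY, vx, vy, variableChange_a₁, variableChange_a₃]
  ring

lemma div_helper4 (b N D s : F) (hb : b ≠ 0) (hD : D ≠ 0) :
    b ^ 4 * (N - s * D) / (b ^ 3 * D) = b * (N / D - s) := by
  field_simp

lemma vc_slope {x₁ x₂ y₁ y₂ : F} (h₁ : W.Nonsingular x₁ y₁) (h₂ : W.Nonsingular x₂ y₂)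
    (hxy : x₁ = x₂ → y₁ ≠ W.negY x₂ y₂) :
    (C • W).toAffine.slope (vx C x₁) (vx C x₂) (vy C x₁ y₁) (vy C x₂ y₂) =
      (↑C.u⁻¹ : F) * (W.slope x₁ x₂ y₁ y₂ - C.s) := by
  have hu := uinv_ne_zero C (F := F)
  by_cases hx : x₁ = x₂
  · subst hx
    have hy : y₁ ≠ W.negY x₁ y₂ := hxy rfl
    have hy' : y₁ = y₂ := by
      have e₁ := (W.equation_iff _ _).mp h₁.1
      have e₂ := (W.equation_iff _ _).mp h₂.1
      have hz : (y₁ - y₂) * (y₁ - W.negY x₁ y₂) = 0 := by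
        simp only [Affine.negY]; linear_combination e₁ - e₂
      rcases mul_eq_zero.mp hz with h | h
      · exact sub_eq_zero.mp h
      · exact absurd (sub_eq_zero.mp h) hy
    subst hy'
    rw [slope_of_Y_ne rfl hy, slope_of_Y_ne rfl (by rw [vc_negY]; exact fun hc => hy (vy_inj hc))]
    have hD : y₁ - W.negY x₁ y₁ ≠ 0 := sub_ne_zero.mpr hy
    have hD' : vy C x₁ y₁ - (C • W).toAffine.negY (vx C x₁) (vy C x₁ y₁) =
        (↑C.u⁻¹ : F) ^ 3 * (y₁ - W.negY x₁ y₁) := by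
      rw [vc_negY]; simp only [Affine.negY, vy]; ring
    have hN' : 3 * vx C x₁ ^ 2 + 2 * (C • W).a₂ * vx C x₁
        + (C • W).a₄ - (C • W).a₁ * vy C x₁ y₁ =
        (↑C.u⁻¹ : F) ^ 4 * ((3 * x₁ ^ 2 + 2 * W.a₂ * x₁ + W.a₄ - W.a₁ * y₁)
          - C.s * (y₁ - W.negY x₁ y₁)) := by
      simp only [Affine.negY, vx, vy, variableChange_a₁, variableChange_a₂, variableChange_a₄]
      ring
    rw [hD', hN', div_helper4 _ _ _ _ hu hD]
  · have hx' : vx C x₁ ≠ vx C x₂ := fun hc => hx (vx_inj hc)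
    rw [slope_of_X_ne hx', slope_of_X_ne hx]
    have hd : x₁ - x₂ ≠ 0 := sub_ne_zero.mpr hx
    have hd' : vx C x₁ - vx C x₂ = (↑C.u⁻¹ : F) ^ 2 * (x₁ - x₂) := by
      simp only [vx]; ring
    have hn' : vy C x₁ y₁ - vy C x₂ y₂ =
        (↑C.u⁻¹ : F) ^ 3 * ((y₁ - y₂) - C.s * (x₁ - x₂)) := by
      simp only [vy]; ring
    rw [hd', hn']
    field_simp

lemma vc_addX (x₁ x₂ L : F) :
    (C • W).toAffine.addX (vx C x₁) (vx C x₂) ((↑C.u⁻¹ : F) * (L - C.s)) =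
      vx C (W.addX x₁ x₂ L) := by
  simp only [Affine.addX, vx, variableChange_a₁, variableChange_a₂]
  ring

lemma vc_negAddY (x₁ x₂ y₁ L : F) :
    (C • W).toAffine.negAddY (vx C x₁) (vx C x₂) (vy C x₁ y₁)
        ((↑C.u⁻¹ : F) * (L - C.s)) =
      vy C (W.addX x₁ x₂ L) (W.negAddY x₁ x₂ y₁ L) := by
  simp only [Affine.negAddY, Affine.addX, vx, vy, variableChange_a₁, variableChange_a₂]
  ring

lemma vc_addY (x₁ x₂ y₁ L : F) :
    (C • W).toAffine.addY (vx C x₁) (vx C x₂) (vy C x₁ y₁)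
        ((↑C.u⁻¹ : F) * (L - C.s)) =
      vy C (W.addX x₁ x₂ L) (W.addY x₁ x₂ y₁ L) := by
  rw [Affine.addY, vc_addX, vc_negAddY, vc_negY, Affine.addY]

lemma some_congr {W' : WeierstrassCurve.Affine F} {x₁ y₁ x₂ y₂ : F}
    (hx : x₁ = x₂) (hy : y₁ = y₂) (h₁ : W'.Nonsingular x₁ y₁) (h₂ : W'.Nonsingular x₂ y₂) :
    Point.some _ _ h₁ = Point.some _ _ h₂ := by
  subst hx; subst hy; rfl

variable (W C) in
/-- The point map under a variable change, as an additive group homomorphism. -/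
noncomputable def vcHom : W.Point →+ (C • W).toAffine.Point where
  toFun P := match P with
    | .zero => .zero
    | .some _ _ h => .some _ _ (vc_nonsingular.mpr h)
  map_zero' := rfl
  map_add' := by
    rintro (_ | @⟨x₁, y₁, h₁⟩) (_ | @⟨x₂, y₂, h₂⟩)
    any_goals rfl
    by_cases h : x₁ = x₂ ∧ y₁ = W.negY x₂ y₂
    · simp only [Point.add_of_Y_eq h.1 h.2]
      exact (Point.add_of_Y_eq (congrArg (vx C) h.1) (by rw [vc_negY, h.1, h.2])).symm
    · have hxy : x₁ = x₂ → y₁ ≠ W.negY x₂ y₂ := fun hx hy => h ⟨hx, hy⟩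
      have hxy' : vx C x₁ = vx C x₂ →
          vy C x₁ y₁ ≠ (C • W).toAffine.negY (vx C x₂) (vy C x₂ y₂) := by
        intro hx hy
        have hx' := vx_inj hx
        rw [vc_negY, hx'] at hy
        exact hxy hx' (vy_inj hy)
      simp only [Point.add_some h, Point.add_some fun hc => hxy' hc.1 hc.2]
      exact some_congr
        (by rw [vc_slope h₁ h₂ hxy, vc_addX])
        (by rw [vc_slope h₁ h₂ hxy, vc_addY]) _ _

lemma vcHom_bijective : Function.Bijective (vcHom W C) := by
  constructor
  · rintro (_ | @⟨x₁, y₁, h₁⟩) (_ | @⟨x₂, y₂, h₂⟩) h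
    any_goals contradiction
    · rfl
    · rcases Point.some.inj h with ⟨hx, hy⟩
      have hx' := vx_inj hx
      subst hx'
      exact some_congr rfl (vy_inj hy) _ _
  · rintro (_ | @⟨x', y', h'⟩)
    · exact ⟨0, rfl⟩
    · have hx : vx C ((↑C.u : F) ^ 2 * x' + C.r) = x' := by
        have h0 : vx C ((↑C.u : F) ^ 2 * x' + C.r) = ((↑C.u⁻¹ : F) * (↑C.u : F)) ^ 2 * x' := by
          simp only [vx]; ring
        rw [h0, Units.inv_mul, one_pow, one_mul]
      have hy : vy C ((↑C.u : F) ^ 2 * x' + C.r)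
          ((↑C.u : F) ^ 3 * y' + C.s * (↑C.u : F) ^ 2 * x' + C.t) = y' := by
        have h0 : vy C ((↑C.u : F) ^ 2 * x' + C.r)
            ((↑C.u : F) ^ 3 * y' + C.s * (↑C.u : F) ^ 2 * x' + C.t) =
            ((↑C.u⁻¹ : F) * (↑C.u : F)) ^ 3 * y' := by
          simp only [vy]; ring
        rw [h0, Units.inv_mul, one_pow, one_mul]
      refine ⟨.some _ _ (vc_nonsingular.mp (by rwa [hx, hy])), ?_⟩
      exact some_congr hx hy _ _

variable (W C) in
/-- The point group isomorphism under a variable change. -/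
noncomputable def vcEquiv : W.Point ≃+ (C • W).toAffine.Point :=
  AddEquiv.ofBijective (vcHom W C) vcHom_bijective

end VCAux


open WeierstrassCurve Finset

namespace CountAux

variable {F : Type} [Field F] [Fintype F]

/-- The short Weierstrass curve `y² = x³ + B`. -/
def curveB (B : F) : WeierstrassCurve F := ⟨0, 0, 0, 0, B⟩

lemma curveB_equation {B x y : F} :
    (curveB B).toAffine.Equation x y ↔ y ^ 2 = x ^ 3 + B := by
  rw [Affine.equation_iff]
  simp [curveB]

lemma curveB_Δ (B : F) : (curveB B).Δ = -432 * B ^ 2 := by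
  simp only [Δ, b₂, b₄, b₆, b₈, curveB]
  ring

/-- The points of a Weierstrass curve with nonzero discriminant over a finite field,
as an option type of affine solutions. -/
noncomputable def pointEquiv (W : WeierstrassCurve.Affine F) (hΔ : W.Δ ≠ 0) :
    W.Point ≃ Option {xy : F × F // W.Equation xy.1 xy.2} where
  toFun P := match P with
    | .zero => none
    | @Affine.Point.some _ _ _ x y h => some ⟨(x, y), h.1⟩
  invFun o := match o with
    | none => .zero
    | some ⟨(_, _), h⟩ => .some _ _ ((W.equation_iff_nonsingular_of_Δ_ne_zero hΔ).mp h)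
  left_inv P := by rcases P with _ | @⟨x, y, h⟩ <;> rfl
  right_inv o := by rcases o with _ | ⟨⟨x, y⟩, h⟩ <;> rfl

lemma card_point (W : WeierstrassCurve.Affine F) (hΔ : W.Δ ≠ 0) :
    Nat.card W.Point = Nat.card {xy : F × F // W.Equation xy.1 xy.2} + 1 := by
  rw [Nat.card_congr (pointEquiv W hΔ), Finite.card_option]

lemma card_sqrts (hF2 : ringChar F ≠ 2) (u : F) :
    ((Nat.card {y : F // y ^ 2 = u} : F)) = 1 + u ^ (Fintype.card F / 2) := by
  classical
  have h := quadraticChar_card_sqrts hF2 u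
  have hc : Nat.card {y : F // y ^ 2 = u} = Fintype.card {y : F // y ^ 2 = u} :=
    Nat.card_eq_fintype_card
  have hsets : ({y : F | y ^ 2 = u}).toFinset.card = Fintype.card {y : F // y ^ 2 = u} := by
    rw [Set.toFinset_card]
    exact Fintype.card_congr (Equiv.subtypeEquivRight fun _ => Iff.rfl)
  rw [hsets] at h
  have : ((Fintype.card {y : F // y ^ 2 = u} : ℤ) : F) = ((quadraticChar F u + 1 : ℤ) : F) := by
    exact_mod_cast congrArg (fun z : ℤ => (z : F)) h
  push_cast at this
  rw [hc]
  rw [this, quadraticChar_eq_pow_of_char_ne_two' hF2]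
  ring

lemma card_affine_points (hF2 : ringChar F ≠ 2) (B : F) :
    ((Nat.card {xy : F × F // (curveB B).toAffine.Equation xy.1 xy.2} : F)) =
      ∑ x : F, (1 + (x ^ 3 + B) ^ (Fintype.card F / 2)) := by
  classical
  have e : {xy : F × F // (curveB B).toAffine.Equation xy.1 xy.2} ≃
      Σ x : F, {y : F // y ^ 2 = x ^ 3 + B} := by
    refine (Equiv.subtypeEquivRight fun xy => curveB_equation).trans
      (Equiv.subtypeProdEquivSigmaSubtype fun x y => y ^ 2 = x ^ 3 + B)
  rw [Nat.card_congr e, Nat.card_eq_fintype_card, Fintype.card_sigma]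
  push_cast
  refine Finset.sum_congr rfl fun x _ => ?_
  rw [← Nat.card_eq_fintype_card, card_sqrts hF2]

end CountAux

namespace CountAux

variable {F : Type} [Field F] [Fintype F]

variable (F) in
lemma sum_pow_F (i : ℕ) (hi : i ≠ 0) :
    ∑ x : F, x ^ i = if Fintype.card F - 1 ∣ i then (-1 : F) else 0 := by
  classical
  rw [← FiniteField.sum_pow_units F i]
  let φ : Fˣ ↪ F := ⟨fun x ↦ x, Units.val_injective⟩
  have huniv : (univ : Finset Fˣ).map φ = univ \ {0} := by
    ext x
    simp only [mem_map, mem_univ, Function.Embedding.coeFn_mk, true_and, mem_sdiff,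
      mem_singleton, φ]
    exact isUnit_iff_ne_zero
  calc
    ∑ x : F, x ^ i = ∑ x ∈ univ \ {(0 : F)}, x ^ i := by
      rw [← Finset.sum_sdiff ({0} : Finset F).subset_univ, Finset.sum_singleton,
        zero_pow hi, add_zero]
    _ = ∑ x : Fˣ, (x : F) ^ i := by rw [← huniv, Finset.sum_map]; rfl
    _ = ∑ x : Fˣ, ((x ^ i : Fˣ) : F) := by simp
  
lemma sum_cubic_pow {m : ℕ} (hm : 0 < m) (hq : Fintype.card F = 6 * m + 1) (B : F) :
    ∑ x : F, (x ^ 3 + B) ^ (3 * m) = -((3 * m).choose (2 * m) : F) * B ^ m := by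
  classical
  have hcard0 : ((Fintype.card F : F)) = 0 := FiniteField.cast_card_eq_zero F
  have key : ∀ x : F, (x ^ 3 + B) ^ (3 * m) =
      ∑ k ∈ range (3 * m + 1), x ^ (3 * k) * (B ^ (3 * m - k) * ((3 * m).choose k : F)) := by
    intro x
    rw [add_pow]
    exact Finset.sum_congr rfl fun k _ => by rw [← pow_mul]; ring
  simp_rw [key]
  rw [Finset.sum_comm]
  have term : ∀ k ∈ range (3 * m + 1), k ≠ 2 * m →
      (∑ x : F, x ^ (3 * k) * (B ^ (3 * m - k) * ((3 * m).choose k : F))) = 0 := by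
    intro k hk hne
    rw [← Finset.sum_mul]
    rcases Nat.eq_zero_or_pos k with rfl | hkpos
    · rw [Nat.mul_zero]
      simp only [pow_zero]
      rw [Finset.sum_const, Finset.card_univ, nsmul_eq_mul, mul_one, hcard0, zero_mul]
    · have h3k : (3 : ℕ) * k ≠ 0 := by positivity
      rw [sum_pow_F F _ h3k, hq]
      have hnd : ¬(6 * m + 1 - 1 ∣ 3 * k) := by
        simp only [Nat.add_sub_cancel]
        intro hdvd
        have h6 : (3 * (2 * m)) ∣ 3 * k := by
          have h62 : 6 * m = 3 * (2 * m) := by ring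
          rwa [h62] at hdvd
        have h2mk : 2 * m ∣ k := (mul_dvd_mul_iff_left (by norm_num : (3 : ℕ) ≠ 0)).mp h6
        rcases h2mk with ⟨c, hc⟩
        have hklt : k < 3 * m + 1 := Finset.mem_range.mp hk
        rcases Nat.lt_or_ge c 2 with hc2 | hc2
        · interval_cases c <;> omega
        · have : k ≥ 4 * m := by
            calc k = 2 * m * c := hc
            _ ≥ 2 * m * 2 := Nat.mul_le_mul_left _ hc2
            _ = 4 * m := by ring
          omega
      rw [if_neg hnd, zero_mul]
  rw [Finset.sum_eq_single_of_mem (2 * m) (Finset.mem_range.mpr (by omega)) term]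
  rw [← Finset.sum_mul, sum_pow_F F _ (by positivity), hq]
  have hdv : 6 * m + 1 - 1 ∣ 3 * (2 * m) := by
    simp only [Nat.add_sub_cancel]
    exact ⟨1, by ring⟩
  rw [if_pos hdv]
  have hsub : 3 * m - 2 * m = m := by omega
  rw [hsub]
  ring

end CountAux

namespace CountAux

/-- `mseq μ p j = μ * (1 + p + ... + p^(j-1))`. -/
def mseq (μ p : ℕ) : ℕ → ℕ
  | 0 => 0
  | j + 1 => μ + p * mseq μ p j

lemma six_mseq {p μ : ℕ} (hp : 1 ≤ p) (hμ : 6 * μ + 1 = p) :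
    ∀ j, 6 * mseq μ p j + 1 = p ^ j
  | 0 => by simp [mseq]
  | j + 1 => by
    have ih := six_mseq hp hμ j
    have hpj : 1 ≤ p ^ j := Nat.one_le_pow _ _ (by omega)
    simp only [mseq]
    rw [pow_succ]
    nlinarith [ih]

lemma choose_small_not_dvd {p a b : ℕ} (hp : p.Prime) (ha : a < p) (hb : b ≤ a) :
    ¬ p ∣ a.choose b := by
  intro h
  have hfac : a.choose b * b.factorial * (a - b).factorial = a.factorial :=
    Nat.choose_mul_factorial_mul_factorial hb
  have : p ∣ a.factorial := hfac ▸ Dvd.dvd.mul_right (Dvd.dvd.mul_right h _) _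
  exact absurd ((Nat.Prime.dvd_factorial hp).mp this) (by omega)

lemma lucas_nonzero {p μ : ℕ} (hp : p.Prime) (h3 : 3 * μ < p) :
    ∀ j, ¬ p ∣ ((3 * mseq μ p j).choose (2 * mseq μ p j))
  | 0 => by
    simp only [mseq, Nat.mul_zero, Nat.choose_self, Nat.dvd_one]
    exact hp.ne_one
  | j + 1 => by
    intro hdvd
    have : Fact p.Prime := ⟨hp⟩
    have hkey := Choose.choose_modEq_choose_mod_mul_choose_div_nat
      (p := p) (n := 3 * mseq μ p (j + 1)) (k := 2 * mseq μ p (j + 1))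
    have hppos : 0 < p := hp.pos
    have hn : 3 * mseq μ p (j + 1) = 3 * μ + p * (3 * mseq μ p j) := by
      simp only [mseq]; ring
    have hk : 2 * mseq μ p (j + 1) = 2 * μ + p * (2 * mseq μ p j) := by
      simp only [mseq]; ring
    have hnm : 3 * mseq μ p (j + 1) % p = 3 * μ := by
      rw [hn, Nat.add_mul_mod_self_left, Nat.mod_eq_of_lt h3]
    have hkm : 2 * mseq μ p (j + 1) % p = 2 * μ := by
      rw [hk, Nat.add_mul_mod_self_left, Nat.mod_eq_of_lt (by omega)]
    have hnd : 3 * mseq μ p (j + 1) / p = 3 * mseq μ p j := by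
      rw [hn, Nat.add_mul_div_left _ _ hppos, Nat.div_eq_of_lt h3, zero_add]
    have hkd : 2 * mseq μ p (j + 1) / p = 2 * mseq μ p j := by
      rw [hk, Nat.add_mul_div_left _ _ hppos, Nat.div_eq_of_lt (by omega), zero_add]
    rw [hnm, hkm, hnd, hkd] at hkey
    have hdvd' : p ∣ (3 * μ).choose (2 * μ) * ((3 * mseq μ p j).choose (2 * mseq μ p j)) :=
      (Nat.modEq_zero_iff_dvd.mpr hdvd).symm.trans hkey |>.symm |> Nat.modEq_zero_iff_dvd.mp
    rcases (Nat.Prime.dvd_mul hp).mp hdvd' with h | h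
    · exact choose_small_not_dvd hp h3 (by omega) h
    · exact lucas_nonzero hp h3 j h

end CountAux


namespace CountAux

open VCAux

variable {F : Type} [Field F] [Fintype F]

lemma curveB_variableChange {v : F} (hv : v ≠ 0) (B : F) :
    (⟨(Units.mk0 v hv)⁻¹, 0, 0, 0⟩ : VariableChange F) • curveB B = curveB (v ^ 6 * B) := by
  have hco : ((((Units.mk0 v hv)⁻¹)⁻¹ : Fˣ) : F) = v := by simp
  ext <;>
    simp only [variableChange_a₁, variableChange_a₂, variableChange_a₃, variableChange_a₄,
      variableChange_a₆, curveB, hco] <;>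
    ring

lemma sixth_power {m : ℕ} (hm : 0 < m) (hq : Fintype.card F = 6 * m + 1) {w : F}
    (hw : w ≠ 0) (h1 : w ^ m = 1) : ∃ v : F, v ≠ 0 ∧ v ^ 6 = w := by
  classical
  set wu : Fˣ := Units.mk0 w hw with hwu
  obtain ⟨g, hg⟩ := IsCyclic.exists_generator (α := Fˣ)
  have hord : orderOf g = 6 * m := by
    rw [orderOf_eq_card_of_forall_mem_zpowers hg, Nat.card_eq_fintype_card,
      Fintype.card_units, hq]
    omega
  have hwm : wu ^ m = 1 := by
    ext
    push_cast [hwu]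
    exact h1
  obtain ⟨k, hk0⟩ : wu ∈ Submonoid.powers g := by
    rw [mem_powers_iff_mem_zpowers]
    exact hg wu
  have hk : g ^ k = wu := hk0
  have hgkm : g ^ (k * m) = 1 := by rw [pow_mul, hk, hwm]
  have h6m : 6 * m ∣ k * m := hord ▸ orderOf_dvd_of_pow_eq_one hgkm
  have h6k : 6 ∣ k := by
    rcases h6m with ⟨c, hc⟩
    refine ⟨c, Nat.eq_of_mul_eq_mul_right hm ?_⟩
    rw [hc]
    ring
  rcases h6k with ⟨t, rfl⟩
  refine ⟨((g ^ t : Fˣ) : F), (g ^ t).ne_zero, ?_⟩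
  have : ((g ^ (6 * t) : Fˣ) : F) = w := by rw [hk]; rfl
  rw [← this]
  push_cast
  rw [← pow_mul, Nat.mul_comm 6 t]

lemma reduce [DecidableEq F] (h2 : (2 : F) ≠ 0) (h3 : (3 : F) ≠ 0) (E : WeierstrassCurve F) [E.IsElliptic]
    (hj : E.j = 0) :
    ∃ B : F, B ≠ 0 ∧ Nonempty (E.toAffine.Point ≃+ (curveB B).toAffine.Point) := by
  have : Invertible (2 : F) := invertibleOfNonzero h2
  have : Invertible (3 : F) := invertibleOfNonzero h3
  obtain ⟨C, hC⟩ := WeierstrassCurve.exists_variableChange_isShortNF E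
  set W := C • E with hW
  have hj' : W.j = 0 := (variableChange_j (W := E) (C := C)).trans hj
  have hc₄ : W.c₄ = 0 := (j_eq_zero_iff W).mp hj'
  have ha₄ : W.a₄ = 0 := by
    have h48 : (48 : F) ≠ 0 := by
      have h48e : (48 : F) = 2 ^ 4 * 3 := by norm_num
      rw [h48e]
      exact mul_ne_zero (pow_ne_zero _ h2) h3
    have hcs := c₄_of_isShortNF W
    rw [hc₄] at hcs
    rcases mul_eq_zero.mp hcs.symm with h | h
    · exact absurd (neg_eq_zero.mp h) h48
    · exact h
  have hΔne : W.Δ ≠ 0 := by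
    have := W.isUnit_Δ
    exact this.ne_zero
  have ha₆ : W.a₆ ≠ 0 := by
    intro h0
    apply hΔne
    rw [Δ_of_isShortNF, ha₄, h0]
    ring
  have hWeq : W = curveB W.a₆ := by
    ext
    · exact a₁_of_isShortNF W
    · exact a₂_of_isShortNF W
    · exact a₃_of_isShortNF W
    · exact ha₄
    · rfl
  exact ⟨W.a₆, ha₆, ⟨hWeq ▸ (vcEquiv E.toAffine C)⟩⟩

lemma count_curveB (hF2 : ringChar F ≠ 2) {m : ℕ} (hm : 0 < m)
    (hq : Fintype.card F = 6 * m + 1) {B : F} (hΔ : (curveB B).Δ ≠ 0) :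
    ((Nat.card (curveB B).toAffine.Point : F)) = 1 - ((3 * m).choose (2 * m) : F) * B ^ m := by
  rw [card_point _ hΔ]
  push_cast
  rw [card_affine_points hF2 B, Finset.sum_add_distrib]
  have hexp : Fintype.card F / 2 = 3 * m := by rw [hq]; omega
  rw [hexp, sum_cubic_pow hm hq B, Finset.sum_const, Finset.card_univ, nsmul_eq_mul, mul_one,
    FiniteField.cast_card_eq_zero]
  ring

end CountAux


open CountAux VCAux in
set_option maxHeartbeats 1000000 in
/-- For `p ≡ 1 (mod 3)`, two elliptic curves over `𝔽_q` with `j`-invariant `0` have the same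
number of rational points iff their groups of rational points are isomorphic. -/
theorem stmt_9 (p r : ℕ) (hp : p.Prime) (hp3 : 3 < p) (hp1mod3 : p % 3 = 1) (hr : 0 < r)
    (F : Type) [Field F] [Fintype F] (hF : Fintype.card F = p ^ r)
    (E₁ E₂ : WeierstrassCurve F) [E₁.IsElliptic] [E₂.IsElliptic]
    (hj₁ : E₁.j = 0) (hj₂ : E₂.j = 0) :
    Nat.card E₁.toAffine.Point = Nat.card E₂.toAffine.Point ↔
      letI := Classical.decEq F; Nonempty (E₁.toAffine.Point ≃+ E₂.toAffine.Point) := by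
  classical
  have hcharP : CharP F p := by
    have h1 : CharP F (ringChar F) := ringChar.charP F
    have hprime : (ringChar F).Prime := CharP.char_is_prime F (ringChar F)
    have hdvd : ringChar F ∣ p ^ r := by
      rw [← hF]
      exact (CharP.cast_eq_zero_iff F (ringChar F) (Fintype.card F)).mp
        (FiniteField.cast_card_eq_zero F)
    have hdp : ringChar F ∣ p := hprime.dvd_of_dvd_pow hdvd
    have heq : ringChar F = p := (Nat.prime_dvd_prime_iff_eq hprime hp).mp hdp
    rw [← heq]
    exact h1
  have hrc : ringChar F = p := ringChar.eq F p
  have hF2 : ringChar F ≠ 2 := by rw [hrc]; omega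
  have h2 : (2 : F) ≠ 0 := by
    intro h0
    have := (CharP.cast_eq_zero_iff F p 2).mp (by exact_mod_cast h0)
    have := Nat.le_of_dvd (by norm_num) this
    omega
  have h3 : (3 : F) ≠ 0 := by
    intro h0
    have := (CharP.cast_eq_zero_iff F p 3).mp (by exact_mod_cast h0)
    have := Nat.le_of_dvd (by norm_num) this
    omega
  have h432 : (432 : F) ≠ 0 := by
    have he : (432 : F) = 2 ^ 4 * 3 ^ 3 := by norm_num
    rw [he]
    exact mul_ne_zero (pow_ne_zero _ h2) (pow_ne_zero _ h3)
  have hp6 : p % 6 = 1 := by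
    rcases hp.eq_two_or_odd with h | h <;> omega
  have hq6 : p ^ r % 6 = 1 := by
    rw [Nat.pow_mod, hp6, Nat.one_pow]
  have hqge : 5 ≤ p ^ r := by
    calc 5 ≤ p := by omega
    _ = p ^ 1 := (pow_one p).symm
    _ ≤ p ^ r := Nat.pow_le_pow_right (by omega) hr
  set m := (p ^ r - 1) / 6 with hmdef
  have hq' : p ^ r = 6 * m + 1 := by omega
  have hq : Fintype.card F = 6 * m + 1 := by rw [hF]; exact hq'
  have hm0 : 0 < m := by omega
  have hchoose : ¬ p ∣ ((3 * m).choose (2 * m)) := by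
    set μ := (p - 1) / 6 with hμdef
    have hμ6 : 6 * μ + 1 = p := by omega
    have h3μ : 3 * μ < p := by omega
    have hms : mseq μ p r = m := by
      have h6 := six_mseq (by omega) hμ6 r
      omega
    have hln := lucas_nonzero hp h3μ r
    rwa [hms] at hln
  have hCne : ((3 * m).choose (2 * m) : F) ≠ 0 := by
    rw [Ne, CharP.cast_eq_zero_iff F p]
    exact hchoose
  obtain ⟨B₁, hB₁, ⟨e₁⟩⟩ := reduce h2 h3 E₁ hj₁
  obtain ⟨B₂, hB₂, ⟨e₂⟩⟩ := reduce h2 h3 E₂ hj₂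
  have hΔ : ∀ B : F, B ≠ 0 → (curveB B).Δ ≠ 0 := by
    intro B hB
    rw [curveB_Δ]
    exact mul_ne_zero (neg_ne_zero.mpr h432) (pow_ne_zero _ hB)
  constructor
  · intro hcard
    have hcc : Nat.card (curveB B₁).toAffine.Point = Nat.card (curveB B₂).toAffine.Point := by
      rw [← Nat.card_congr e₁.toEquiv, ← Nat.card_congr e₂.toEquiv, hcard]
    have hFF : ((Nat.card (curveB B₁).toAffine.Point : F)) =
        ((Nat.card (curveB B₂).toAffine.Point : F)) := by
      exact_mod_cast congrArg (fun n : ℕ => (n : F)) hcc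
    rw [count_curveB hF2 hm0 hq (hΔ B₁ hB₁), count_curveB hF2 hm0 hq (hΔ B₂ hB₂),
      sub_right_inj] at hFF
    have hpow : B₁ ^ m = B₂ ^ m := mul_left_cancel₀ hCne hFF
    have hw : (B₂ / B₁) ^ m = 1 := by
      rw [div_pow, ← hpow, div_self (pow_ne_zero m hB₁)]
    obtain ⟨v, hv, hv6⟩ := sixth_power hm0 hq (div_ne_zero hB₂ hB₁) hw
    have hB₂eq : v ^ 6 * B₁ = B₂ := by
      rw [hv6]
      field_simp
    have equiv3 : (curveB B₁).toAffine.Point ≃+ (curveB B₂).toAffine.Point := by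
      have h := vcEquiv (curveB B₁).toAffine ⟨(Units.mk0 v hv)⁻¹, 0, 0, 0⟩
      have hcv : (⟨(Units.mk0 v hv)⁻¹, 0, 0, 0⟩ : VariableChange F) • curveB B₁ = curveB B₂ := by
        rw [curveB_variableChange hv B₁, hB₂eq]
      exact hcv ▸ h
    exact ⟨(e₁.trans equiv3).trans e₂.symm⟩
  · rintro ⟨e⟩
    exact Nat.card_congr e.toEquiv
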